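/- Let A be a strongly regular graph on n² vertices admitting an equitable partition into n cells of size n such that the quotient matrix equals b·(J_n − I_n) for a positive integer b (i.e., the quotient graph is complete). Then A has valency b(n−1) and −b is a restricted eigenvalue of A; consequently A is of Latin square type. -/

import Mathlib

open Matrix

/-- `A` is the adjacency matrix of a strongly regular graph with valency `k`,
`λ`-parameter `l` and `μ`-parameter `m`. -/
def IsSRGMatrix {V : Type*} [Fintype V] [DecidableEq V] (A : Matrix V V ℝ)
    (k l m : ℝ) : Prop :=
  A.IsSymm ∧ (∀ x y, A x y = 0 ∨ A x y = 1) ∧ (∀ x, A x x = 0) ∧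
    (A *ᵥ (fun _ => (1 : ℝ)) = fun _ => k) ∧
    A * A = k • (1 : Matrix V V ℝ) + l • A +
      m • ((Matrix.of fun _ _ => (1 : ℝ)) - 1 - A)

/-- `b` is an eigenvalue of `A`. -/
def HasEigenvalue' {V : Type*} [Fintype V] (A : Matrix V V ℝ) (b : ℝ) : Prop :=
  ∃ x : V → ℝ, x ≠ 0 ∧ A *ᵥ x = b • x

/-- `A` (with valency `k`) is a strongly regular graph of Latin square type. -/
def IsLatinSquareType {V : Type*} [Fintype V] [DecidableEq V]
    (A : Matrix V V ℝ) (k : ℝ) : Prop :=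
  ∃ n t : ℤ, 0 < n ∧ 0 < t ∧ (Fintype.card V : ℤ) = n ^ 2 ∧
    k = (t : ℝ) * ((n : ℝ) - 1) ∧
    ∀ b : ℝ, HasEigenvalue' A b → b ≠ k → b = (n : ℝ) - (t : ℝ) ∨ b = -(t : ℝ)

/-- If a strongly regular graph on `n²` vertices admits an equitable partition
into `n` cells of size `n` whose quotient matrix is `b·(J - I)` (the quotient
graph is complete), then its valency is `b(n-1)`, `-b` is a restricted
eigenvalue, and the graph is of Latin square type. -/
theorem stmt_9 {V : Type*} [Fintype V] [DecidableEq V] (n : ℕ) (b : ℤ)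
    (hb : 0 < b) (hn : 1 < n) (hV : Fintype.card V = n ^ 2)
    (A : Matrix V V ℝ) (k l m : ℝ) (hsrg : IsSRGMatrix A k l m)
    (c : V → Fin n)
    (hcell : ∀ i : Fin n, (Finset.univ.filter fun v => c v = i).card = n)
    (hequit : A * (Matrix.of fun v i => if c v = i then (1 : ℝ) else 0)
      = (Matrix.of fun v i => if c v = i then (1 : ℝ) else 0) *
        ((b : ℝ) • ((Matrix.of fun _ _ => (1 : ℝ)) - (1 : Matrix (Fin n) (Fin n) ℝ)))) :
    k = (b : ℝ) * ((n : ℝ) - 1) ∧ HasEigenvalue' A (-(b : ℝ)) ∧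
      IsLatinSquareType A k := by
  obtain ⟨hsymm, -, -, hrowv, hA2⟩ := hsrg
  haveI : NeZero n := ⟨by omega⟩
  have h01 : (0 : Fin n) ≠ 1 := by
    simp [Fin.ext_iff, Fin.val_one', Nat.mod_eq_of_lt hn]
  -- cells are nonempty
  have hexc : ∀ i : Fin n, ∃ v, c v = i := by
    intro i
    have := hcell i
    have : (Finset.univ.filter fun v => c v = i).Nonempty := by
      rw [← Finset.card_pos, this]; omega
    obtain ⟨v, hv⟩ := this
    exact ⟨v, (Finset.mem_filter.mp hv).2⟩
  -- h1 : cell row sums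
  have h1 : ∀ (v : V) (i : Fin n),
      (∑ w, A v w * (if c w = i then (1:ℝ) else 0)) = if c v = i then 0 else (b:ℝ) := by
    intro v i
    have h := congrFun (congrFun hequit v) i
    simp only [Matrix.mul_apply, Matrix.of_apply, Matrix.smul_apply, Matrix.sub_apply,
      Matrix.one_apply, smul_eq_mul] at h
    rw [h, Finset.sum_eq_single (c v)]
    · by_cases hcv : c v = i <;> simp [hcv]
    · intro j _ hj; simp [Ne.symm hj]
    · simp
  -- row sums
  have hrow : ∀ v, (∑ w, A v w) = k := by
    intro v
    have := congrFun hrowv v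
    simpa [Matrix.mulVec, dotProduct] using this
  -- valency
  have hk : k = (b:ℝ) * ((n:ℝ) - 1) := by
    obtain ⟨v, -⟩ := hexc 0
    have h2 : (∑ w, A v w) = ∑ i : Fin n, ∑ w, A v w * (if c w = i then (1:ℝ) else 0) := by
      rw [Finset.sum_comm]
      refine Finset.sum_congr rfl fun w _ => ?_
      rw [← Finset.mul_sum]
      simp [Finset.sum_ite_eq]
    rw [hrow] at h2
    have h3 : ∑ i : Fin n, (if c v = i then (0:ℝ) else (b:ℝ)) = (b:ℝ) * ((n:ℝ) - 1) := by
      have : ∀ i : Fin n, (if c v = i then (0:ℝ) else (b:ℝ))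
          = (b:ℝ) - if c v = i then (b:ℝ) else 0 := by
        intro i; split <;> ring
      simp only [this, Finset.sum_sub_distrib, Finset.sum_const, Finset.card_univ,
        Fintype.card_fin, Finset.sum_ite_eq, Finset.mem_univ, if_true, nsmul_eq_mul]
      ring
    rw [h2, ← h3]
    refine Finset.sum_congr rfl fun i _ => h1 v i
  -- eigenvector for -b
  have heig : HasEigenvalue' A (-(b:ℝ)) := by
    refine ⟨fun v => (if c v = (0 : Fin n) then (1:ℝ) else 0)
      - (if c v = (1 : Fin n) then (1:ℝ) else 0), ?_, ?_⟩
    · obtain ⟨v, hv⟩ := hexc 0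
      intro hx
      have h := congrFun hx v
      have hne : ¬ c v = 1 := by rw [hv]; exact h01
      simp [hv, hne, Nat.ne_of_gt hn] at h
    · funext v
      have : (A *ᵥ fun v => (if c v = (0 : Fin n) then (1:ℝ) else 0)
          - (if c v = (1 : Fin n) then (1:ℝ) else 0)) v
          = (∑ w, A v w * (if c w = 0 then (1:ℝ) else 0))
            - (∑ w, A v w * (if c w = 1 then (1:ℝ) else 0)) := by
        simp [Matrix.mulVec, dotProduct, mul_sub, Finset.sum_sub_distrib]
      rw [this, h1, h1]
      simp only [Pi.smul_apply, smul_eq_mul]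
      by_cases h0 : c v = 0
      · have hne : ¬ c v = 1 := by rw [h0]; exact h01
        simp [h0, hne, Nat.ne_of_gt hn]
      · by_cases h1' : c v = 1
        · simp [h0, h1', Nat.ne_of_gt hn]
        · simp [h0, h1']
  -- P times an n x n matrix
  have hPM : ∀ (M : Matrix (Fin n) (Fin n) ℝ) (v : V) (j : Fin n),
      ((Matrix.of fun v i => if c v = i then (1:ℝ) else 0) * M) v j = M (c v) j := by
    intro M v j
    rw [Matrix.mul_apply, Finset.sum_eq_single (c v)]
    · simp
    · intro i _ hi
      rw [Matrix.of_apply, if_neg (fun h => hi h.symm), zero_mul]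
    · simp
  -- column sums of P
  have hJP : ∀ j : Fin n, (∑ w : V, (if c w = j then (1:ℝ) else 0)) = n := by
    intro j
    rw [Finset.sum_boole, hcell j]
  obtain ⟨v₀, hv₀⟩ := hexc 0
  set Q : Matrix (Fin n) (Fin n) ℝ :=
    (b : ℝ) • ((Matrix.of fun _ _ => (1 : ℝ)) - (1 : Matrix (Fin n) (Fin n) ℝ)) with hQdef
  have hQapp : ∀ i j : Fin n, Q i j = (b:ℝ) * (1 - if i = j then (1:ℝ) else 0) := by
    intro i j
    simp [hQdef, Matrix.one_apply]
  have hAAP : A * A * (Matrix.of fun v i => if c v = i then (1 : ℝ) else 0)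
      = (Matrix.of fun v i => if c v = i then (1 : ℝ) else 0) * (Q * Q) := by
    rw [Matrix.mul_assoc, hequit, ← Matrix.mul_assoc, hequit, Matrix.mul_assoc]
  -- the key entrywise relation
  have hmat : ∀ j : Fin n, (Q * Q) 0 j = k * (if (0:Fin n) = j then (1:ℝ) else 0)
      + l * Q 0 j + m * ((n:ℝ) - (if (0:Fin n) = j then (1:ℝ) else 0) - Q 0 j) := by
    intro j
    have h := congrFun (congrFun hAAP v₀) j
    rw [hA2] at h
    simp only [Matrix.add_mul, Matrix.sub_mul, Matrix.smul_mul, Matrix.add_apply,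
      Matrix.sub_apply, Matrix.smul_apply, Matrix.one_mul, smul_eq_mul] at h
    rw [hequit] at h
    rw [hPM, hPM] at h
    rw [hv₀] at h
    have hJ : (((Matrix.of fun _ _ => (1:ℝ)) : Matrix V V ℝ) *
        (Matrix.of fun v i => if c v = i then (1:ℝ) else 0)) v₀ j = (n:ℝ) := by
      rw [Matrix.mul_apply]
      simp only [Matrix.of_apply, one_mul]
      exact hJP j
    rw [hJ] at h
    have hP0 : (Matrix.of fun v i => if c v = i then (1:ℝ) else 0) v₀ j
        = (if (0:Fin n) = j then (1:ℝ) else 0) := by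
      simp [hv₀]
    rw [hP0] at h
    linarith [h]
  -- compute (Q*Q) 0 0 and (Q*Q) 0 1
  have hQQ0 : (Q * Q) 0 0 = (b:ℝ)^2 * ((n:ℝ) - 1) := by
    rw [Matrix.mul_apply]
    have : ∀ i : Fin n, Q 0 i * Q i 0 = (b:ℝ)^2 - (if (0:Fin n) = i then (b:ℝ)^2 else 0) := by
      intro i
      rw [hQapp, hQapp]
      by_cases h : (0:Fin n) = i
      · rw [← h]; norm_num
      · have h' : ¬ i = 0 := fun hh => h hh.symm
        rw [if_neg h, if_neg h', if_neg h]; ring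
    simp only [this, Finset.sum_sub_distrib, Finset.sum_const, Finset.card_univ,
      Fintype.card_fin, Finset.sum_ite_eq, Finset.mem_univ, if_true, nsmul_eq_mul]
    ring
  have hQQ1 : (Q * Q) 0 1 = (b:ℝ)^2 * ((n:ℝ) - 2) := by
    rw [Matrix.mul_apply]
    have : ∀ i : Fin n, Q 0 i * Q i 1 = (b:ℝ)^2 - (if (0:Fin n) = i then (b:ℝ)^2 else 0)
        - (if i = (1:Fin n) then (b:ℝ)^2 else 0) := by
      intro i
      rw [hQapp, hQapp]
      by_cases h : (0:Fin n) = i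
      · rw [← h, if_pos rfl, if_neg h01, if_pos rfl, if_neg h01]; ring
      · by_cases h' : i = 1
        · rw [h', if_neg h01, if_pos rfl, if_neg h01, if_pos rfl]; ring
        · rw [if_neg h, if_neg h', if_neg h, if_neg h']; ring
    simp only [this, Finset.sum_sub_distrib, Finset.sum_const, Finset.card_univ,
      Fintype.card_fin, Finset.sum_ite_eq, Finset.sum_ite_eq', Finset.mem_univ, if_true,
      nsmul_eq_mul]
    ring
  -- derive parameters
  have hn1 : (1:ℝ) < (n:ℝ) := by exact_mod_cast hn
  have hbR : (0:ℝ) < (b:ℝ) := by exact_mod_cast hb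
  have hm : m = (b:ℝ)^2 - (b:ℝ) := by
    have h := hmat 0
    rw [hQQ0, hQapp 0 0] at h
    simp only [if_pos rfl, if_true] at h
    have h2 : m * ((n:ℝ) - 1) = ((b:ℝ)^2 - b) * ((n:ℝ) - 1) := by
      linear_combination (-1:ℝ) * h - hk
    exact mul_right_cancel₀ (ne_of_gt (by linarith)) h2
  have hl : l = (n:ℝ) + (b:ℝ)^2 - 3*(b:ℝ) := by
    have h := hmat 1
    rw [hQQ1, hQapp 0 1] at h
    simp only [if_neg h01] at h
    have h2 : l * (b:ℝ) = ((n:ℝ) + (b:ℝ)^2 - 3*b) * (b:ℝ) := by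
      linear_combination (-1:ℝ) * h - ((n:ℝ) - (b:ℝ)) * hm
    exact mul_right_cancel₀ (ne_of_gt hbR) h2
  -- final assembly
  refine ⟨hk, heig, (n : ℤ), b, by exact_mod_cast Nat.zero_lt_of_lt hn, hb, ?_, ?_, ?_⟩
  · exact_mod_cast hV
  · push_cast; exact hk
  · rintro θ ⟨x, hx, hAx⟩ hθk
    -- column sums
    have hcol : ∀ w, (∑ v, A v w) = k := by
      intro w
      rw [← hrow w]
      exact Finset.sum_congr rfl fun v _ => (hsymm.apply v w).symm
    -- sum of x is zero
    have hsum : ∑ v, x v = 0 := by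
      have h : θ * ∑ v, x v = k * ∑ v, x v := by
        have h1' : ∑ v, (A *ᵥ x) v = θ * ∑ v, x v := by
          rw [hAx]
          simp [Finset.mul_sum]
        have h2' : ∑ v, (A *ᵥ x) v = k * ∑ v, x v := by
          simp only [Matrix.mulVec, dotProduct]
          rw [Finset.sum_comm]
          rw [Finset.mul_sum]
          refine Finset.sum_congr rfl fun w _ => ?_
          rw [← Finset.sum_mul, hcol]
        rw [← h1', h2']
      have := sub_eq_zero.mpr h
      rw [← sub_mul] at this
      rcases mul_eq_zero.mp this with h' | h'
      · exact absurd (by linarith [sub_eq_zero.mp h'] : θ = k) hθk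
      · exact h'
    obtain ⟨v, hv⟩ := Function.ne_iff.mp hx
    -- quadratic
    have hq : θ^2 * x v = (k - m + (l - m) * θ) * x v := by
      have hAAx : (A * A) *ᵥ x = (θ^2) • x := by
        rw [← Matrix.mulVec_mulVec, hAx, Matrix.mulVec_smul, hAx, smul_smul]
        rw [sq]
      rw [hA2] at hAAx
      have h := congrFun hAAx v
      simp only [Matrix.add_mulVec, Matrix.sub_mulVec, Matrix.smul_mulVec,
        Pi.add_apply, Pi.sub_apply, Pi.smul_apply, smul_eq_mul] at h
      rw [hAx] at h
      have hJx : ((Matrix.of fun _ _ => (1:ℝ) : Matrix V V ℝ) *ᵥ x) v = 0 := by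
        simp only [Matrix.mulVec, dotProduct, Matrix.of_apply, one_mul]
        exact hsum
      have hIx : ((1 : Matrix V V ℝ) *ᵥ x) v = x v := by
        rw [Matrix.one_mulVec]
      rw [hJx, hIx] at h
      simp only [Pi.smul_apply, smul_eq_mul] at h
      rw [← h]
      ring
    have hq2 : θ^2 = k - m + (l - m) * θ := mul_right_cancel₀ hv hq
    have hfac : (θ + (b:ℝ)) * (θ - ((n:ℝ) - (b:ℝ))) = 0 := by
      rw [hk, hm, hl] at hq2
      linear_combination hq2
    rcases mul_eq_zero.mp hfac with h' | h'
    · right; push_cast; linarith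
    · left; push_cast; linarith
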